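/- Let K ≥ 2, let γ_1, …, γ_K > 0 be pairwise distinct, and let ω_1, …, ω_K ∈ ℝ be such that there exist at least two indices j ≠ j' with ω_j ≠ 0 and ω_{j'} ≠ 0. Then there exist no functions f, g : ℝ → ℝ such that Σ_{k=1}^K ω_k e^{−γ_k(t−u)} = f(t)·g(u) for all real numbers u, t with 0 ≤ u ≤ t ≤ 1. -/

import Mathlib

open scoped BigOperators

open Filter Real Set Topology

private lemma sumexp_analytic {K : ℕ} (c d : Fin K → ℝ) :
    AnalyticOnNhd ℝ (fun x : ℝ => ∑ k, c k * Real.exp (d k * x)) Set.univ := by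
  apply Finset.analyticOnNhd_fun_sum
  intro k _
  exact analyticOnNhd_const.mul
    ((analyticOnNhd_const.mul analyticOnNhd_id).rexp)

private lemma eq_zero_of_eqon_interval {h : ℝ → ℝ}
    (ha : AnalyticOnNhd ℝ h Set.univ)
    (h0 : ∀ x ∈ Set.Ioo (0:ℝ) (1/2), h x = 0) (x : ℝ) : h x = 0 := by
  have := ha.eqOn_zero_of_preconnected_of_eventuallyEq_zero
    (isPreconnected_univ) (Set.mem_univ (1/4 : ℝ))
    (Filter.eventually_of_mem (Ioo_mem_nhds (by norm_num) (by norm_num)) h0)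
  exact this (Set.mem_univ x)

/-- Non-factorizability of the MA-fBM kernel: if at least two weights are nonzero and
the mean-reversion speeds are pairwise distinct, then the kernel
`κ(t,u) = Σ_k ω_k e^{-γ_k (t-u)}` does not factor as `f(t)·g(u)` on `0 ≤ u ≤ t ≤ 1`. -/
theorem stmt_5 (K : ℕ) (hK : 2 ≤ K) (γ ω : Fin K → ℝ) (hγ : ∀ k, 0 < γ k)
    (hdist : Function.Injective γ)
    (hω : ∃ j j' : Fin K, j ≠ j' ∧ ω j ≠ 0 ∧ ω j' ≠ 0) :
    ¬ ∃ f g : ℝ → ℝ, ∀ u t : ℝ, 0 ≤ u → u ≤ t → t ≤ 1 →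
      ∑ k, ω k * Real.exp (-γ k * (t - u)) = f t * g u := by
  rintro ⟨f, g, hfg⟩
  obtain ⟨j, j', hjj', hj, hj'⟩ := hω
  set F : ℝ → ℝ := fun x => ∑ k, ω k * Real.exp (-γ k * x) with hF
  -- F is analytic
  have hFa : AnalyticOnNhd ℝ F Set.univ := by
    rw [hF]; exact sumexp_analytic ω (fun k => -γ k)
  -- the basic relation on the triangle
  have hrel : ∀ u t : ℝ, 0 ≤ u → u ≤ t → t ≤ 1 → F (t - u) = f t * g u := by
    intro u t h1 h2 h3; exact hfg u t h1 h2 h3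
  -- functional equation on a small square
  have key0 : ∀ a b : ℝ, 0 ≤ a → 0 ≤ b → a + b ≤ 1 →
      F a * F b = F (a + b) * F 0 := by
    intro a b ha hb hab
    have e1 : F a = f (a + b) * g b := by
      have := hrel b (a + b) hb (by linarith) hab
      simpa using this
    have e2 : F (a + b) = f (a + b) * g 0 := by
      have := hrel 0 (a + b) le_rfl (by linarith) hab
      simpa using this
    have e3 : F b = f b * g 0 := by
      have := hrel 0 b le_rfl hb (by linarith)
      simpa using this
    have e4 : F 0 = f b * g b := by
      have := hrel b b hb le_rfl (by linarith)
      simpa using this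
    rw [e1, e2, e3, e4]; ring
  -- extend in the first variable
  have key1 : ∀ b ∈ Set.Ioo (0:ℝ) (1/2), ∀ a : ℝ,
      F a * F b - F (a + b) * F 0 = 0 := by
    intro b hb a
    apply eq_zero_of_eqon_interval (h := fun a => F a * F b - F (a + b) * F 0)
    · apply AnalyticOnNhd.sub
      · exact hFa.mul analyticOnNhd_const
      · exact (hFa.comp (analyticOnNhd_id.add analyticOnNhd_const)
          (Set.mapsTo_univ _ _)).mul analyticOnNhd_const
    · intro x hx
      have := key0 x b hx.1.le hb.1.le (by cases hx; cases hb; linarith)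
      linarith [this]
  -- extend in the second variable
  have key : ∀ a b : ℝ, F a * F b = F (a + b) * F 0 := by
    intro a b
    have := eq_zero_of_eqon_interval (h := fun b => F a * F b - F (a + b) * F 0)
      (by
        apply AnalyticOnNhd.sub
        · exact analyticOnNhd_const.mul hFa
        · exact (hFa.comp (analyticOnNhd_const.add analyticOnNhd_id)
            (Set.mapsTo_univ _ _)).mul analyticOnNhd_const)
      (fun x hx => key1 x hx a) b
    linarith [this]
  -- the support
  set s : Finset (Fin K) := Finset.univ.filter (fun k => ω k ≠ 0) with hs
  have hjs : j ∈ s := by simp [hs, hj]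
  have hj's : j' ∈ s := by simp [hs, hj']
  obtain ⟨m, hms, hmin⟩ := s.exists_min_image γ ⟨j, hjs⟩
  obtain ⟨M, hMs, hmax⟩ := s.exists_max_image γ ⟨j, hjs⟩
  have hωm : ω m ≠ 0 := by simpa [hs] using hms
  have hωM : ω M ≠ 0 := by simpa [hs] using hMs
  have hmM : γ m < γ M := by
    by_contra h
    push_neg at h
    have h1 : γ j = γ m :=
      le_antisymm (le_trans (hmax j hjs) h) (hmin j hjs)
    have h2 : γ j' = γ m :=
      le_antisymm (le_trans (hmax j' hj's) h) (hmin j' hj's)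
    exact hjj' (hdist (h1.trans h2.symm))
  -- Limit A : exp (γ m * b) * F b → ω m  at top
  have expand : ∀ (c : ℝ) (x : ℝ), Real.exp (c * x) * F x
      = ∑ k, ω k * Real.exp ((c - γ k) * x) := by
    intro c x
    rw [hF, Finset.mul_sum]
    apply Finset.sum_congr rfl
    intro k _
    rw [← mul_assoc, mul_comm (Real.exp (c * x)) (ω k), mul_assoc, ← Real.exp_add]
    ring_nf
  have limA : Tendsto (fun b => Real.exp (γ m * b) * F b) atTop (𝓝 (ω m)) := by
    have : (ω m) = ∑ k, (if k = m then ω m else 0) := by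
      rw [Finset.sum_ite_eq' Finset.univ m (fun _ => ω m)]
      simp
    rw [this]
    simp only [expand]
    apply tendsto_finset_sum
    intro k _
    by_cases hk : k = m
    · subst hk; simp
    · simp only [if_neg hk]
      by_cases hωk : ω k = 0
      · simp [hωk]
      · have hks : k ∈ s := by simp [hs, hωk]
        have hlt : γ m - γ k < 0 := by
          rcases lt_or_eq_of_le (hmin k hks) with h | h
          · linarith
          · exact absurd (hdist h.symm) hk
        have : Tendsto (fun b : ℝ => Real.exp ((γ m - γ k) * b)) atTop (𝓝 0) := by
          rw [Real.tendsto_exp_comp_nhds_zero]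
          exact (tendsto_const_mul_atBot_of_neg hlt).2 tendsto_id
        simpa using this.const_mul (ω k)
  -- Conclude F a = F 0 * exp (-γ m * a) for all a
  have hFform : ∀ a : ℝ, F a = F 0 * Real.exp (-γ m * a) := by
    intro a
    have limB : Tendsto (fun b => Real.exp (γ m * (a + b)) * F (a + b)) atTop
        (𝓝 (ω m)) :=
      limA.comp (tendsto_atTop_add_const_left atTop a tendsto_id)
    have heq : ∀ b : ℝ, (Real.exp (γ m * a) * F a) * (Real.exp (γ m * b) * F b)
        = (Real.exp (γ m * (a + b)) * F (a + b)) * F 0 := by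
      intro b
      rw [mul_add, Real.exp_add]
      calc Real.exp (γ m * a) * F a * (Real.exp (γ m * b) * F b)
          = Real.exp (γ m * a) * Real.exp (γ m * b) * (F a * F b) := by ring
        _ = Real.exp (γ m * a) * Real.exp (γ m * b) * (F (a + b) * F 0) := by
            rw [key a b]
        _ = Real.exp (γ m * a) * Real.exp (γ m * b) * F (a + b) * F 0 := by ring
    have l1 : Tendsto (fun b => (Real.exp (γ m * a) * F a) * (Real.exp (γ m * b) * F b))
        atTop (𝓝 ((Real.exp (γ m * a) * F a) * ω m)) := limA.const_mul _
    have l2 : Tendsto (fun b => (Real.exp (γ m * (a + b)) * F (a + b)) * F 0)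
        atTop (𝓝 (ω m * F 0)) := limB.mul_const _
    have := tendsto_nhds_unique (by simpa only [heq] using l1) l2
    have h2 : Real.exp (γ m * a) * F a = F 0 := by
      rw [mul_comm (ω m) (F 0)] at this
      exact mul_right_cancel₀ hωm this
    have := congrArg (· * Real.exp (-γ m * a)) h2
    rw [mul_comm (Real.exp (γ m * a)) (F a), mul_assoc, ← Real.exp_add] at this
    simpa using this
  -- Limit C at bot with the max exponent
  have limC : Tendsto (fun a => Real.exp (γ M * a) * F a) atBot (𝓝 (ω M)) := by
    have : (ω M) = ∑ k, (if k = M then ω M else 0) := by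
      rw [Finset.sum_ite_eq' Finset.univ M (fun _ => ω M)]
      simp
    rw [this]
    simp only [expand]
    apply tendsto_finset_sum
    intro k _
    by_cases hk : k = M
    · subst hk; simp
    · simp only [if_neg hk]
      by_cases hωk : ω k = 0
      · simp [hωk]
      · have hks : k ∈ s := by simp [hs, hωk]
        have hlt : 0 < γ M - γ k := by
          rcases lt_or_eq_of_le (hmax k hks) with h | h
          · linarith
          · exact absurd (hdist h) hk
        have : Tendsto (fun b : ℝ => Real.exp ((γ M - γ k) * b)) atBot (𝓝 0) := by
          rw [Real.tendsto_exp_comp_nhds_zero]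
          exact (tendsto_const_mul_atBot_of_pos hlt).2 tendsto_id
        simpa using this.const_mul (ω k)
  -- but with hFform the same limit is 0
  have limC' : Tendsto (fun a => Real.exp (γ M * a) * F a) atBot (𝓝 0) := by
    have : ∀ a : ℝ, Real.exp (γ M * a) * F a
        = F 0 * Real.exp ((γ M - γ m) * a) := by
      intro a
      rw [hFform a]
      rw [mul_comm (F 0), ← mul_assoc, ← Real.exp_add]
      ring_nf
    simp only [this]
    have : Tendsto (fun a : ℝ => Real.exp ((γ M - γ m) * a)) atBot (𝓝 0) := by
      rw [Real.tendsto_exp_comp_nhds_zero]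
      exact (tendsto_const_mul_atBot_of_pos (by linarith)).2 tendsto_id
    simpa using this.const_mul (F 0)
  exact hωM (tendsto_nhds_unique limC limC')
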